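/- arXiv:0710.0065 — 2 statements merged into one kernel-verified Lean document; each statement's English description precedes it below -/
import Mathlib

section
/- An element ∑_g r_g g̅ of the crossed product A ⋊_α^σ G lies in the center Z(A ⋊_α^σ G) if and only if for all a ∈ A and all (s,t) ∈ G × G: r_s σ_s(a) = a r_s, and r_{ts⁻¹} α(ts⁻¹, s) = σ_s(r_{s⁻¹t}) α(s, s⁻¹t). -/
/-- A `G`-crossed system `{A, G, σ, α}`: a unital ring `A`, a group `G`,
`σ : G → Aut(A)` and a `σ`-cocycle `α : G × G → U(A)` satisfying the
crossed-system axioms (i)-(iii). -/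
structure CrossedSystem (A : Type*) [Ring A] (G : Type*) [Group G] where
  σ : G → RingAut A
  α : G → G → Aˣ
  compat : ∀ x y : G, ∀ a : A,
    σ x (σ y a) = (α x y : A) * σ (x * y) a * ((α x y)⁻¹ : Aˣ)
  cocycle : ∀ x y z : G,
    (α x y : A) * (α (x * y) z : A) = σ x (α y z : A) * (α x (y * z) : A)
  unit_right : ∀ x : G, α x 1 = 1
  unit_left : ∀ x : G, α 1 x = 1

variable {A : Type*} [Ring A] {G : Type*} [Group G]

/-- Multiplication of the crossed product `A ⋊_α^σ G`, realized on the free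
left `A`-module `G →₀ A`: `(a x̄)(b ȳ) = a σ_x(b) α(x,y) (x*y)‾`. -/
noncomputable def cmul (C : CrossedSystem A G) (f g : G →₀ A) : G →₀ A :=
  f.sum fun s a => g.sum fun t b =>
    Finsupp.single (s * t) (a * C.σ s b * (C.α s t : A))

/-- The element `1_A ē` of the crossed product. -/
noncomputable def cone : G →₀ A := Finsupp.single 1 1

/-- The canonical embedding `ι : A → A ⋊_α^σ G`, `a ↦ a ē`; its range is `Ã`. -/
noncomputable def cemb (a : A) : G →₀ A := Finsupp.single 1 a

/-- The commutant `Comm(Ã)` of the embedded base ring in the crossed product. -/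
noncomputable def cCommutant (C : CrossedSystem A G) : Set (G →₀ A) :=
  {x | ∀ a : A, cmul C (cemb a) x = cmul C x (cemb a)}

/-- `I` is a (non-unital) two-sided ideal of the crossed product `A ⋊_α^σ G`. -/
def cIsIdeal (C : CrossedSystem A G) (I : Set (G →₀ A)) : Prop :=
  0 ∈ I ∧ (∀ x ∈ I, ∀ y ∈ I, x + y ∈ I) ∧ (∀ x ∈ I, -x ∈ I) ∧
    (∀ x ∈ I, ∀ y : G →₀ A, cmul C y x ∈ I ∧ cmul C x y ∈ I)

lemma sigma_one (C : CrossedSystem A G) (a : A) : C.σ 1 a = a := by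
  apply (C.σ 1).injective
  have h := C.compat 1 1 a
  simpa [C.unit_left] using h

lemma cmul_single_right (C : CrossedSystem A G) (r : G →₀ A) (s : G) (b : A) (g : G) :
    cmul C r (Finsupp.single s b) g
      = r (g * s⁻¹) * C.σ (g * s⁻¹) b * (C.α (g * s⁻¹) s : A) := by
  classical
  unfold cmul
  rw [Finsupp.sum_apply]
  have step : ∀ u ∈ r.support,
      ((Finsupp.single s b).sum fun t c =>
        Finsupp.single (u * t) (r u * C.σ u c * (C.α u t : A))) g
      = if u = g * s⁻¹ then r u * C.σ u b * (C.α u s : A) else 0 := by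
    intro u _
    rw [Finsupp.sum_single_index
      (by rw [map_zero, mul_zero, zero_mul, Finsupp.single_zero])]
    rw [Finsupp.single_apply, show (u * s = g) = (u = g * s⁻¹) from
      propext eq_mul_inv_iff_mul_eq.symm]
  rw [Finsupp.sum_congr (g2 := fun u a =>
      if u = g * s⁻¹ then a * C.σ u b * (C.α u s : A) else 0) step,
    Finsupp.sum_ite_eq' r (g * s⁻¹) (fun u a => a * C.σ u b * (C.α u s : A))]
  by_cases h : g * s⁻¹ ∈ r.support
  · simp [h]
  · simp [h, Finsupp.notMem_support_iff.mp h]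

lemma cmul_single_left (C : CrossedSystem A G) (r : G →₀ A) (s : G) (b : A) (g : G) :
    cmul C (Finsupp.single s b) r g
      = b * C.σ s (r (s⁻¹ * g)) * (C.α s (s⁻¹ * g) : A) := by
  classical
  unfold cmul
  rw [Finsupp.sum_single_index (by
    simp only [zero_mul, Finsupp.single_zero]
    exact Finset.sum_const_zero)]
  rw [Finsupp.sum_apply]
  have step : ∀ t ∈ r.support,
      (Finsupp.single (s * t) (b * C.σ s (r t) * (C.α s t : A))) g
      = if t = s⁻¹ * g then b * C.σ s (r t) * (C.α s t : A) else 0 := by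
    intro t _
    rw [Finsupp.single_apply, show (s * t = g) = (t = s⁻¹ * g) from
      propext ⟨fun h => by rw [← h]; group, fun h => by rw [h]; group⟩]
  rw [Finsupp.sum_congr (g2 := fun t c =>
      if t = s⁻¹ * g then b * C.σ s c * (C.α s t : A) else 0) step,
    Finsupp.sum_ite_eq' r (s⁻¹ * g) (fun t c => b * C.σ s c * (C.α s t : A))]
  by_cases h : s⁻¹ * g ∈ r.support
  · simp [h]
  · simp [h, Finsupp.notMem_support_iff.mp h]

theorem stmt_4 (C : CrossedSystem A G) (r : G →₀ A) :
    (∀ x : G →₀ A, cmul C r x = cmul C x r) ↔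
      (∀ s : G, ∀ a : A, r s * C.σ s a = a * r s) ∧
      (∀ s t : G, r (t * s⁻¹) * (C.α (t * s⁻¹) s : A)
          = C.σ s (r (s⁻¹ * t)) * (C.α s (s⁻¹ * t) : A)) := by
  constructor
  · intro h
    constructor
    · intro s a
      have hs := DFunLike.congr_fun (h (Finsupp.single 1 a)) s
      rw [cmul_single_right, cmul_single_left] at hs
      simpa [C.unit_right, C.unit_left, sigma_one] using hs
    · intro s t
      have hs := DFunLike.congr_fun (h (Finsupp.single s 1)) t
      rw [cmul_single_right, cmul_single_left] at hs
      simpa using hs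
  · rintro ⟨h1, h2⟩ x
    have key : ∀ (s : G) (b : A),
        cmul C r (Finsupp.single s b) = cmul C (Finsupp.single s b) r := by
      intro s b
      ext g
      rw [cmul_single_right, cmul_single_left]
      calc r (g * s⁻¹) * C.σ (g * s⁻¹) b * (C.α (g * s⁻¹) s : A)
          = b * r (g * s⁻¹) * (C.α (g * s⁻¹) s : A) := by rw [h1]
        _ = b * (r (g * s⁻¹) * (C.α (g * s⁻¹) s : A)) := by rw [mul_assoc]
        _ = b * (C.σ s (r (s⁻¹ * g)) * (C.α s (s⁻¹ * g) : A)) := by rw [h2 s g]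
        _ = b * C.σ s (r (s⁻¹ * g)) * (C.α s (s⁻¹ * g) : A) := by rw [mul_assoc]
    have hx1 : cmul C r x = x.sum fun s b => cmul C r (Finsupp.single s b) := by
      unfold cmul
      rw [Finsupp.sum_comm]
      refine Finsupp.sum_congr fun t _ => Finsupp.sum_congr fun u _ => ?_
      exact (Finsupp.sum_single_index
        (h := fun t' b => Finsupp.single (u * t') (r u * C.σ u b * (C.α u t' : A)))
        (by simp only [map_zero, mul_zero, zero_mul, Finsupp.single_zero])).symm
    have hx2 : cmul C x r = x.sum fun s b => cmul C (Finsupp.single s b) r := by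
      unfold cmul
      refine Finsupp.sum_congr fun s _ => ?_
      exact (Finsupp.sum_single_index
        (h := fun u a => r.sum fun t c =>
          Finsupp.single (u * t) (a * C.σ u c * (C.α u t : A)))
        (by simp only [zero_mul, Finsupp.single_zero]; exact Finset.sum_const_zero)).symm
    rw [hx1, hx2]
    exact Finsupp.sum_congr fun s _ => key s (x s)
end

section
/- Let Ã denote the canonical image of A in A ⋊_α^σ G (via a ↦ a e̅). Then the commutant Comm(Ã) = {b ∈ A ⋊_α^σ G : ab = ba for all a ∈ Ã} equals { ∑_s r_s s̅ : r_s σ_s(a) = a r_s for all a ∈ A, s ∈ G }. -/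
variable {A : Type*} [Ring A] {G : Type*} [Group G]

lemma left_apply (C : CrossedSystem A G) (a : A) (x : G →₀ A) (s : G) :
    (cmul C (cemb a) x) s = a * x s := by
  unfold cmul cemb
  rw [Finsupp.sum_single_index]
  · simp only [one_mul, sigma_one, C.unit_left, Units.val_one, mul_one]
    rw [Finsupp.sum_apply]
    rw [Finsupp.sum_eq_single s (fun t _ ht => by
        exact Finsupp.single_eq_of_ne' ht) (fun _ => by simp)]
    simp
  · simp [Finsupp.sum]

lemma right_apply (C : CrossedSystem A G) (a : A) (x : G →₀ A) (s : G) :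
    (cmul C x (cemb a)) s = x s * C.σ s a := by
  unfold cmul cemb
  rw [Finsupp.sum_apply]
  rw [Finsupp.sum_eq_single s (fun t _ ht => by
      rw [Finsupp.sum_single_index (by simp)]
      exact Finsupp.single_eq_of_ne' (by simpa using ht)) (fun _ => by simp)]
  rw [Finsupp.sum_single_index (by simp)]
  simp [C.unit_right]

theorem stmt_9 (C : CrossedSystem A G) (x : G →₀ A) :
    x ∈ cCommutant C ↔ ∀ s : G, ∀ a : A, x s * C.σ s a = a * x s := by
  constructor
  · intro h s a
    have := congrFun (congrArg (fun f : G →₀ A => (f : G → A)) (h a)) s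
    simp only [left_apply, right_apply] at this
    exact this.symm
  · intro h a
    ext s
    rw [left_apply, right_apply, h s a]
end
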